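/- Let Λ be an artin algebra and (T,F) a torsion theory on mod Λ. Put I := ⋂_{X ∈ F} ann_Λ(X) and Γ := Λ/I. Then every module in F is annihilated by I, so F may be regarded as a full subcategory of mod Γ; the module Γ itself belongs to F; and the pair (T ∩ mod Γ, F) is a faithful torsion theory on mod Γ. -/

import Mathlib

open CategoryTheory

set_option maxHeartbeats 1000000
set_option synthInstance.maxHeartbeats 400000

noncomputable section

namespace Iyama

universe v u uv w

instance hasExtModuleCat (B : Type) [Ring B] : HasExt.{v+1} (ModuleCat.{v} B) := by
  letI := HasDerivedCategory.standard (ModuleCat.{v} B)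
  exact hasExt_of_hasDerivedCategory _

/-- additivity of `Ext.mk₀`. -/
lemma ext_mk₀_add {C : Type u} [Category.{uv} C] [Abelian C] [HasExt.{w} C]
    {X Y : C} (f g : X ⟶ Y) :
    Abelian.Ext.mk₀ (f + g) = Abelian.Ext.mk₀ f + Abelian.Ext.mk₀ g := by
  letI := HasDerivedCategory.standard C
  ext
  simp only [Abelian.Ext.mk₀_hom, Abelian.Ext.add_hom, Functor.map_add]
  simp [ShiftedHom.mk₀, Preadditive.add_comp]

variable {A B : Type} [Ring A] [Ring B]

/-- The action of `a : A` on a `B`-module `T` with commuting `A`-action,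
as a `B`-linear endomorphism. -/
def smulLinearMap (A : Type) [Ring A] {B : Type} [Ring B] (T : Type v) [AddCommGroup T]
    [Module B T] [Module A T] [SMulCommClass A B T] (a : A) : T →ₗ[B] T where
  toFun t := a • t
  map_add' x y := smul_add a x y
  map_smul' b t := smul_comm a b t

noncomputable instance extSMul (L : ModuleCat.{v} B) (T : Type v) [AddCommGroup T] [Module B T]
    [Module A T] [SMulCommClass A B T] (n : ℕ) :
    SMul A (Abelian.Ext.{v+1} L (ModuleCat.of B T) n) :=
  ⟨fun a e => e.comp (Abelian.Ext.mk₀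
    (X := ModuleCat.of B T) (Y := ModuleCat.of B T) (ModuleCat.ofHom (smulLinearMap A T a))) (add_zero n)⟩

lemma extSMul_def (L : ModuleCat.{v} B) (T : Type v) [AddCommGroup T] [Module B T]
    [Module A T] [SMulCommClass A B T] (n : ℕ) (a : A)
    (e : Abelian.Ext.{v+1} L (ModuleCat.of B T) n) :
    a • e = e.comp (Abelian.Ext.mk₀
      (X := ModuleCat.of B T) (Y := ModuleCat.of B T) (ModuleCat.ofHom (smulLinearMap A T a))) (add_zero n) :=
  rfl

lemma smulLinearMap_one (T : Type v) [AddCommGroup T] [Module B T] [Module A T]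
    [SMulCommClass A B T] :
    (ModuleCat.ofHom (smulLinearMap A T (1 : A)) : ModuleCat.of B T ⟶ ModuleCat.of B T) = 𝟙 (ModuleCat.of B T) := by
  apply ModuleCat.hom_ext
  apply LinearMap.ext
  intro t
  exact one_smul A t

noncomputable instance extModule (L : ModuleCat.{v} B) (T : Type v) [AddCommGroup T] [Module B T]
    [Module A T] [SMulCommClass A B T] (n : ℕ) :
    Module A (Abelian.Ext.{v+1} L (ModuleCat.of B T) n) where
  one_smul e := by
    rw [extSMul_def, smulLinearMap_one, Abelian.Ext.comp_mk₀_id]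
  mul_smul a b e := by
    rw [extSMul_def, extSMul_def, extSMul_def,
      Abelian.Ext.comp_assoc_of_third_deg_zero, Abelian.Ext.mk₀_comp_mk₀]
    have h2 : smulLinearMap (B := B) A T (a * b)
        = (smulLinearMap (B := B) A T a).comp (smulLinearMap (B := B) A T b) := by
      apply LinearMap.ext
      intro t
      exact mul_smul a b t
    rw [h2]
    rfl
  smul_zero a := by
    rw [extSMul_def]
    exact Abelian.Ext.zero_comp _ _ _ _ _
  smul_add a e e' := by
    rw [extSMul_def, extSMul_def, extSMul_def]
    exact Abelian.Ext.add_comp e e' _ _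
  add_smul a b e := by
    rw [extSMul_def, extSMul_def, extSMul_def]
    have : (ModuleCat.ofHom (smulLinearMap A T (a + b)) : ModuleCat.of B T ⟶ ModuleCat.of B T)
        = (ModuleCat.ofHom (smulLinearMap A T a) : ModuleCat.of B T ⟶ ModuleCat.of B T) + ModuleCat.ofHom (smulLinearMap A T b) := by
      apply ModuleCat.hom_ext
      apply LinearMap.ext
      intro t
      exact add_smul a b t
    rw [this, ext_mk₀_add]
    exact Abelian.Ext.comp_add e _ _ _
  zero_smul e := by
    rw [extSMul_def]
    have : (ModuleCat.ofHom (smulLinearMap A T (0 : A)) : ModuleCat.of B T ⟶ ModuleCat.of B T) = 0 := by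
      apply ModuleCat.hom_ext
      apply LinearMap.ext
      intro t
      exact zero_smul A t
    rw [this, Abelian.Ext.mk₀_zero]
    exact Abelian.Ext.comp_zero e _ _ _ _

/-- `Ext^i(M, T) ≠ 0` (as `B`-modules). -/
def extNonzero (B : Type) [Ring B] (M : Type v) [AddCommGroup M] [Module B M] (i : ℕ) : Prop :=
  ¬ Subsingleton (Abelian.Ext.{v+1} (ModuleCat.of B M) (ModuleCat.of B (ULift.{v} B)) i)

/-- The grade of a `B`-module `M` : `inf { i | Ext^i_B(M, B) ≠ 0 }`, as an element of `ℕ∞`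
(the infimum of the empty set being `⊤`). -/
noncomputable def grade (B : Type) [Ring B] (M : Type v) [AddCommGroup M] [Module B M] : ℕ∞ :=
  sInf ((fun i : ℕ => (i : ℕ∞)) '' {i : ℕ | extNonzero B M i})

/-- The strong grade of a `B`-module `M`: the infimum of the grades of all its submodules. -/
noncomputable def sgrade (B : Type) [Ring B] (M : Type v) [AddCommGroup M] [Module B M] : ℕ∞ :=
  ⨅ N : Submodule B M, grade B N

/-- The reduced grade of a `B`-module `M` : `inf { i > 0 | Ext^i_B(M, B) ≠ 0 }`. -/
noncomputable def rgrade (B : Type) [Ring B] (M : Type v) [AddCommGroup M] [Module B M] : ℕ∞ :=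
  sInf ((fun i : ℕ => (i : ℕ∞)) '' {i : ℕ | 0 < i ∧ extNonzero B M i})

/-- Projective dimension at most `n`, via vanishing of `Ext^i` for `i > n`. -/
def pdLE (Γ : Type) [Ring Γ] (L : Type) [AddCommGroup L] [Module Γ L] (n : ℕ) : Prop :=
  ∀ (M : Type) [AddCommGroup M] [Module Γ M], ∀ i : ℕ, n < i →
    Subsingleton (Abelian.Ext.{1} (ModuleCat.of Γ L) (ModuleCat.of Γ M) i)

/-- Projective dimension equal to `n`. -/
def pdEq (Γ : Type) [Ring Γ] (L : Type) [AddCommGroup L] [Module Γ L] (n : ℕ) : Prop :=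
  pdLE Γ L n ∧ ∀ m : ℕ, m < n → ¬ pdLE Γ L m

/-- Global dimension at most `n`: every finitely generated left module has projective
dimension at most `n`. -/
def glDimLE (Γ : Type) [Ring Γ] (n : ℕ) : Prop :=
  ∀ (L : Type) [AddCommGroup L] [Module Γ L] [Module.Finite Γ L], pdLE Γ L n

/-- The socle of a module: the sum of all its simple submodules. -/
def socle (B : Type) [Ring B] (M : Type v) [AddCommGroup M] [Module B M] : Submodule B M :=
  sSup {N : Submodule B M | IsSimpleModule B N}


/-- The `(l,n)`-condition of Iyama for a ring `Γ`: for every finitely generated right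
`Γ`-module `L`, the strong grade of the left `Γ`-module `Ext^l(L,Γ)` is at least `n`. -/
def LnCondition (Γ : Type) [Ring Γ] (l n : ℕ) : Prop :=
  ∀ (L : Type) [AddCommGroup L] [Module Γᵐᵒᵖ L] [Module.Finite Γᵐᵒᵖ L],
    (n : ℕ∞) ≤ sgrade Γ (Abelian.Ext.{1} (ModuleCat.of Γᵐᵒᵖ L) (ModuleCat.of Γᵐᵒᵖ Γ) l)

/-- The `(l,n)ᵒᵖ`-condition: `Γᵒᵖ` satisfies the `(l,n)`-condition, i.e. for every finitely
generated left `Γ`-module `L`, the strong grade of the right `Γ`-module `Ext^l(L,Γ)`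
is at least `n`. -/
def LnConditionOp (Γ : Type) [Ring Γ] (l n : ℕ) : Prop :=
  ∀ (L : Type) [AddCommGroup L] [Module Γ L] [Module.Finite Γ L],
    (n : ℕ∞) ≤ sgrade Γᵐᵒᵖ (Abelian.Ext.{1} (ModuleCat.of Γ L) (ModuleCat.of Γ Γ) l)

/-- `Γ` is an Auslander-regular ring with `gl.dim Γ ≤ 2`: global dimension at most `2`
together with the `(1,1)`- and `(2,2)`-conditions. -/
def AuslanderRegular2 (Γ : Type) [Ring Γ] : Prop :=
  glDimLE Γ 2 ∧ LnCondition Γ 1 1 ∧ LnCondition Γ 2 2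

/-- `Γ` is an Auslander algebra: `gl.dim Γ ≤ 2` and `dom.dim Γ ≥ 2`, the latter meaning that
there is an exact sequence `0 → Γ → I⁰ → I¹` with `I⁰`, `I¹` finitely generated,
projective and injective. -/
def IsAuslanderAlgebra (Γ : Type) [Ring Γ] : Prop :=
  glDimLE Γ 2 ∧
  ∃ (I0 I1 : Type) (_ : AddCommGroup I0) (_ : AddCommGroup I1)
    (_ : Module Γ I0) (_ : Module Γ I1),
    Module.Finite Γ I0 ∧ Module.Projective Γ I0 ∧ Module.Injective Γ I0 ∧
    Module.Finite Γ I1 ∧ Module.Projective Γ I1 ∧ Module.Injective Γ I1 ∧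
    ∃ (f : Γ →ₗ[Γ] I0) (g : I0 →ₗ[Γ] I1),
      Function.Injective f ∧ LinearMap.range f = LinearMap.ker g

/-- A torsion theory `(T, F)` on the category of finitely generated `Λ`-modules:
`F = T^⊥` and `T = ^⊥F` with respect to Hom-vanishing. -/
structure IsTorsionTheory (Λ : Type) [Ring Λ] (T F : Set (ModuleCat.{0} Λ)) : Prop where
  fg_T : ∀ X ∈ T, Module.Finite Λ X
  fg_F : ∀ X ∈ F, Module.Finite Λ X
  mem_F_iff : ∀ (X : ModuleCat.{0} Λ), Module.Finite Λ X →
    (X ∈ F ↔ ∀ Y ∈ T, ∀ f : Y ⟶ X, f = 0)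
  mem_T_iff : ∀ (X : ModuleCat.{0} Λ), Module.Finite Λ X →
    (X ∈ T ↔ ∀ Y ∈ F, ∀ f : X ⟶ Y, f = 0)

/-- The category `mod Λ` of finitely generated `Λ`-modules. -/
abbrev fgCat (Λ : Type) [Ring Λ] :=
  ObjectProperty.FullSubcategory (fun X : ModuleCat.{0} Λ => Module.Finite Λ X)

/-- The category `pr Γ` of finitely generated projective `Γ`-modules. -/
abbrev prCat (Γ : Type) [Ring Γ] :=
  ObjectProperty.FullSubcategory (fun X : ModuleCat.{0} Γ => Module.Finite Γ X ∧ Module.Projective Γ X)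

/-- The full subcategory of `ModuleCat Λ` on a set `F` of objects. -/
abbrev subCat {Λ : Type} [Ring Λ] (F : Set (ModuleCat.{0} Λ)) :=
  ObjectProperty.FullSubcategory (fun X : ModuleCat.{0} Λ => X ∈ F)



section TTAux

variable {Λ : Type} [Ring Λ] {T F : Set (ModuleCat.{0} Λ)}

lemma aux_hom_ext {A B : ModuleCat.{0} Λ} (f : A ⟶ B) (h : ∀ x, f x = 0) : f = 0 := by
  ext x; exact h x

lemma aux_hom_apply_zero {A B : ModuleCat.{0} Λ} {f : A ⟶ B} (h : f = 0) (x : A) : f x = 0 := by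
  rw [h]; rfl

lemma memF_of_equiv (htf : IsTorsionTheory Λ T F) {X Y : ModuleCat.{0} Λ} (hX : X ∈ F)
    (e : X ≃ₗ[Λ] Y) : Y ∈ F := by
  have finX : Module.Finite Λ X := htf.fg_F X hX
  have finY : Module.Finite Λ Y := Module.Finite.equiv e
  refine (htf.mem_F_iff Y finY).mpr fun Z hZ f => ?_
  have h0 := (htf.mem_F_iff X finX).mp hX Z hZ (ModuleCat.ofHom (e.symm.toLinearMap ∘ₗ f.hom))
  refine aux_hom_ext f fun z => ?_
  have hz : e.symm (f z) = 0 := aux_hom_apply_zero h0 z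
  calc f z = e (e.symm (f z)) := (e.apply_symm_apply _).symm
  _ = e 0 := by rw [hz]
  _ = 0 := map_zero e

lemma memT_of_equiv (htf : IsTorsionTheory Λ T F) {X Y : ModuleCat.{0} Λ} (hX : X ∈ T)
    (e : X ≃ₗ[Λ] Y) : Y ∈ T := by
  have finX : Module.Finite Λ X := htf.fg_T X hX
  have finY : Module.Finite Λ Y := Module.Finite.equiv e
  refine (htf.mem_T_iff Y finY).mpr fun Z hZ f => ?_
  have h0 := (htf.mem_T_iff X finX).mp hX Z hZ (ModuleCat.ofHom (f.hom ∘ₗ e.toLinearMap))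
  refine aux_hom_ext f fun y => ?_
  calc f y = f (e (e.symm y)) := by rw [e.apply_symm_apply]
  _ = 0 := aux_hom_apply_zero h0 (e.symm y)

lemma memF_sub (htf : IsTorsionTheory Λ T F) {X : ModuleCat.{0} Λ} (hX : X ∈ F)
    (N : Submodule Λ X) (hfin : Module.Finite Λ N) : ModuleCat.of Λ N ∈ F := by
  refine (htf.mem_F_iff _ hfin).mpr fun Z hZ f => ?_
  have h0 := (htf.mem_F_iff X (htf.fg_F X hX)).mp hX Z hZ (ModuleCat.ofHom (N.subtype ∘ₗ f.hom))
  refine aux_hom_ext f fun z => ?_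
  exact Subtype.ext (aux_hom_apply_zero h0 z)

lemma memF_pi (htf : IsTorsionTheory Λ T F) {n : ℕ} (X : Fin n → ModuleCat.{0} Λ)
    (hX : ∀ j, X j ∈ F) : ModuleCat.of Λ (∀ j, X j) ∈ F := by
  have fin : Module.Finite Λ (∀ j, (X j : Type)) := by
    have := fun j => htf.fg_F _ (hX j)
    exact Module.Finite.pi
  refine (htf.mem_F_iff _ fin).mpr fun Z hZ f => ?_
  refine aux_hom_ext f fun z => ?_
  funext j
  have h0 := (htf.mem_F_iff (X j) (htf.fg_F _ (hX j))).mp (hX j) Z hZ (ModuleCat.ofHom ((LinearMap.proj j) ∘ₗ f.hom))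
  exact aux_hom_apply_zero h0 z

lemma memT_quot (htf : IsTorsionTheory Λ T F) {X : ModuleCat.{0} Λ} (hX : X ∈ T)
    (N : Submodule Λ X) : ModuleCat.of Λ (X ⧸ N) ∈ T := by
  have finX : Module.Finite Λ X := htf.fg_T X hX
  have fin : Module.Finite Λ ((X : Type) ⧸ N) :=
    Module.Finite.of_surjective N.mkQ N.mkQ_surjective
  refine (htf.mem_T_iff _ fin).mpr fun Z hZ f => ?_
  have h0 := (htf.mem_T_iff X finX).mp hX Z hZ (ModuleCat.ofHom (f.hom ∘ₗ N.mkQ))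
  refine aux_hom_ext f fun q => ?_
  obtain ⟨x, rfl⟩ := N.mkQ_surjective q
  exact aux_hom_apply_zero h0 x

lemma aux_iInf_cons {α : Type*} [CompleteLattice α] {n : ℕ} (a : α) (g : Fin n → α) :
    (⨅ j : Fin (n + 1), Fin.cons a g j) = a ⊓ ⨅ j, g j := by
  apply le_antisymm
  · refine le_inf (iInf_le _ 0) (le_iInf fun j => ?_)
    simpa using iInf_le (fun j : Fin (n + 1) => Fin.cons a g j) j.succ
  · refine le_iInf fun j => ?_
    induction j using Fin.cases with
    | zero => simpa using inf_le_left
    | succ j => simpa using le_trans inf_le_right (iInf_le _ j)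

end TTAux
lemma aux_smul_eq {Λ G : Type} [Ring Λ] [Ring G] (π : Λ →+* G) {I : Ideal Λ}
    (hker : RingHom.ker π = I) {K : Type} [AddCommGroup K] [Module Λ K]
    (hK : I ≤ Module.annihilator Λ K) {a b : Λ} (h : π a = π b) (k : K) : a • k = b • k := by
  have hab : a - b ∈ I := by
    rw [← hker]
    simpa [RingHom.mem_ker, map_sub, sub_eq_zero] using h
  have h0 := Module.mem_annihilator.mp (hK hab) k
  rw [sub_smul, sub_eq_zero] at h0
  exact h0

noncomputable def auxSMul {Λ G : Type} [Ring Λ] [Ring G] (π : Λ →+* G)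
    (hs : Function.Surjective π) (K : Type) [AddCommGroup K] [Module Λ K] : SMul G K :=
  ⟨fun g k => Function.surjInv hs g • k⟩

noncomputable def auxModule {Λ G : Type} [Ring Λ] [Ring G] {π : Λ →+* G}
    (hs : Function.Surjective π) {I : Ideal Λ} (hker : RingHom.ker π = I)
    (K : Type) [AddCommGroup K] [Module Λ K] (hK : I ≤ Module.annihilator Λ K) :
    Module G K :=
  letI := auxSMul π hs K
  hs.moduleLeft π (fun c x =>
    aux_smul_eq π hker hK (Function.surjInv_eq hs (π c)) x)

lemma auxModule_smul_eq {Λ G : Type} [Ring Λ] [Ring G] {π : Λ →+* G}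
    (hs : Function.Surjective π) {I : Ideal Λ} (hker : RingHom.ker π = I)
    (K : Type) [AddCommGroup K] [Module Λ K] (hK : I ≤ Module.annihilator Λ K)
    (a : Λ) (k : K) :
    (letI := auxModule hs hker K hK; (π a • k : K)) = a • k :=
  aux_smul_eq π hker hK (Function.surjInv_eq hs (π a)) k

lemma aux_span_le₁ {Λ G : Type} [Ring Λ] [Ring G] (π : Λ →+* G) (hs : Function.Surjective π)
    (X : ModuleCat.{0} G) (s : Set ((ModuleCat.restrictScalars π).obj X)) :
    (Submodule.span G s : Set ((ModuleCat.restrictScalars π).obj X)) ⊆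
      (Submodule.span Λ s : Set ((ModuleCat.restrictScalars π).obj X)) := by
  have h : Submodule.span G s ≤
      { carrier := (Submodule.span Λ s : Set ((ModuleCat.restrictScalars π).obj X))
        add_mem' := fun h1 h2 => Submodule.add_mem _ h1 h2
        zero_mem' := Submodule.zero_mem _
        smul_mem' := by
          intro g x hx
          obtain ⟨a, rfl⟩ := hs g
          exact Submodule.smul_mem (Submodule.span Λ s) a hx } :=
    Submodule.span_le.mpr Submodule.subset_span
  exact fun x hx => h hx

lemma aux_span_le₂ {Λ G : Type} [Ring Λ] [Ring G] (π : Λ →+* G)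
    (X : ModuleCat.{0} G) (s : Set ((ModuleCat.restrictScalars π).obj X)) :
    (Submodule.span Λ s : Set ((ModuleCat.restrictScalars π).obj X)) ⊆
      (Submodule.span G s : Set ((ModuleCat.restrictScalars π).obj X)) := by
  have h : Submodule.span Λ s ≤
      { carrier := (Submodule.span G s : Set ((ModuleCat.restrictScalars π).obj X))
        add_mem' := fun h1 h2 => Submodule.add_mem _ h1 h2
        zero_mem' := Submodule.zero_mem _
        smul_mem' := by
          intro a x hx
          exact Submodule.smul_mem (Submodule.span G s) (π a) hx } :=
    Submodule.span_le.mpr Submodule.subset_span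
  exact fun x hx => h hx

lemma aux_finite_down {Λ G : Type} [Ring Λ] [Ring G] (π : Λ →+* G)
    (hs : Function.Surjective π) (X : ModuleCat.{0} G) (h : Module.Finite G X) :
    Module.Finite Λ ((ModuleCat.restrictScalars π).obj X) := by
  have h' : Module.Finite G ((ModuleCat.restrictScalars π).obj X) := h
  obtain ⟨S, hS⟩ := h'.fg_top
  refine ⟨⟨S, ?_⟩⟩
  rw [eq_top_iff]
  intro x _
  have hx : x ∈ Submodule.span G (S : Set ((ModuleCat.restrictScalars π).obj X)) :=
    hS ▸ Submodule.mem_top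
  exact aux_span_le₁ π hs X S hx

lemma aux_finite_up {Λ G : Type} [Ring Λ] [Ring G] (π : Λ →+* G)
    (X : ModuleCat.{0} G) (h : Module.Finite Λ ((ModuleCat.restrictScalars π).obj X)) :
    Module.Finite G X := by
  have hfin : Module.Finite G ((ModuleCat.restrictScalars π).obj X) := by
    obtain ⟨S, hS⟩ := h.fg_top
    refine ⟨⟨S, ?_⟩⟩
    rw [eq_top_iff]
    intro x _
    have hx : x ∈ Submodule.span Λ (S : Set ((ModuleCat.restrictScalars π).obj X)) :=
      hS ▸ Submodule.mem_top
    exact aux_span_le₂ π X S hx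
  exact hfin


noncomputable def aux_equiv_restrict {Λ G : Type} [Ring Λ] [Ring G] {π : Λ →+* G}
    (hs : Function.Surjective π) {I : Ideal Λ} (hker : RingHom.ker π = I)
    (K : Type) [AddCommGroup K] [Module Λ K] (hK : I ≤ Module.annihilator Λ K) :
    letI := auxModule hs hker K hK
    K ≃ₗ[Λ] ((ModuleCat.restrictScalars π).obj (ModuleCat.of G K)) :=
  letI := auxModule hs hker K hK
  { AddEquiv.refl K with
    map_smul' := fun a k =>
      (aux_smul_eq π hker hK (Function.surjInv_eq hs (π a)) k).symm }

theorem aux_tt {Λ G : Type} [Ring Λ] [Ring G] {T F : Set (ModuleCat.{0} Λ)}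
    (htf : IsTorsionTheory Λ T F) {I : Ideal Λ}
    (hann : ∀ X ∈ F, I ≤ Module.annihilator Λ X)
    (π : Λ →+* G) (hs : Function.Surjective π) (hker : RingHom.ker π = I) :
    IsTorsionTheory G {X : ModuleCat.{0} G | (ModuleCat.restrictScalars π).obj X ∈ T}
      {X : ModuleCat.{0} G | (ModuleCat.restrictScalars π).obj X ∈ F} := by
  constructor
  · intro X hX
    exact aux_finite_up π X (htf.fg_T _ hX)
  · intro X hX
    exact aux_finite_up π X (htf.fg_F _ hX)
  · intro X hfin
    constructor
    · intro hXF Y hY f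
      have h0 := (htf.mem_F_iff _ (htf.fg_F _ hXF)).mp hXF _ hY
        ((ModuleCat.restrictScalars π).map f)
      exact aux_hom_ext f fun x => aux_hom_apply_zero h0 x
    · intro h
      refine (htf.mem_F_iff _ (aux_finite_down π hs X hfin)).mpr ?_
      intro Y hY f
      let N : Submodule Λ Y := Submodule.span Λ {z : Y | ∃ a ∈ I, ∃ y : Y, z = a • y}
      have hNker : N ≤ LinearMap.ker f.hom := by
        rw [Submodule.span_le]
        rintro z ⟨a, ha, y, rfl⟩
        have hπa : π a = 0 := by rw [← hker] at ha; exact ha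
        simp only [SetLike.mem_coe, LinearMap.mem_ker]
        have hsm : f.hom (a • y) = π a • f.hom y := f.hom.map_smul a y
        rw [hsm, hπa, zero_smul]
      let Q := (Y : Type) ⧸ N
      let fbar := N.liftQ f.hom hNker
      have hKQ : I ≤ Module.annihilator Λ Q := by
        intro a ha
        rw [Module.mem_annihilator]
        intro m
        obtain ⟨y, rfl⟩ := N.mkQ_surjective m
        rw [← map_smul, Submodule.mkQ_apply, Submodule.Quotient.mk_eq_zero]
        exact Submodule.subset_span ⟨a, ha, y, rfl⟩
      letI : Module G Q := auxModule hs hker Q hKQ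
      let XQ : ModuleCat.{0} G := ModuleCat.of G Q
      have hXQT : (ModuleCat.restrictScalars π).obj XQ ∈ T := by
        exact memT_of_equiv htf (memT_quot htf hY N) (aux_equiv_restrict hs hker Q hKQ)
      let g : XQ ⟶ X := ModuleCat.ofHom
        { toFun := fbar
          map_add' := fbar.map_add
          map_smul' := fun γ m => by
            obtain ⟨a, rfl⟩ := hs γ
            have h2 := aux_smul_eq (K := Q) π hker hKQ (Function.surjInv_eq hs (π a)) m
            have h1 := fbar.map_smul a m
            exact (DFunLike.congr_arg fbar h2).trans h1 }
      have hg := h XQ hXQT g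
      refine aux_hom_ext f fun y => ?_
      have hz : g (N.mkQ y) = 0 := aux_hom_apply_zero hg _
      have : g (N.mkQ y) = f y := by
        show fbar (N.mkQ y) = f y
        simp [fbar, Submodule.mkQ_apply, Submodule.liftQ_apply]
      rw [← this, hz]
      rfl
  · intro X hfin
    constructor
    · intro hXT Y hY f
      have h0 := (htf.mem_T_iff _ (htf.fg_T _ hXT)).mp hXT _ hY
        ((ModuleCat.restrictScalars π).map f)
      exact aux_hom_ext f fun x => aux_hom_apply_zero h0 x
    · intro h
      refine (htf.mem_T_iff _ (aux_finite_down π hs X hfin)).mpr ?_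
      intro Y hY f
      have hIY : I ≤ Module.annihilator Λ Y := hann Y hY
      letI : Module G Y := auxModule hs hker Y hIY
      let Y' : ModuleCat.{0} G := ModuleCat.of G Y
      have hY'F : (ModuleCat.restrictScalars π).obj Y' ∈ F := by
        exact memF_of_equiv htf hY (aux_equiv_restrict hs hker (Y : Type) hIY)
      let g : X ⟶ Y' := ModuleCat.ofHom
        { toFun := f.hom
          map_add' := f.hom.map_add
          map_smul' := fun γ x => by
            obtain ⟨a, rfl⟩ := hs γ
            have h1 := f.hom.map_smul a x
            have h2 := aux_smul_eq π hker hIY (Function.surjInv_eq hs (π a)) (f.hom x)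
            exact h1.trans h2.symm }
      have hg := h Y' hY'F g
      exact aux_hom_ext f fun x => aux_hom_apply_zero hg x



/-- Iyama, Proposition 1.2.1(1). -/
theorem statement0 (R : Type) [CommRing R] [IsArtinianRing R]
    (Λ : Type) [Ring Λ] [Algebra R Λ] [Module.Finite R Λ]
    (T F : Set (ModuleCat.{0} Λ)) (htf : IsTorsionTheory Λ T F)
    (I : Ideal Λ) (hI : I = ⨅ X ∈ F, Module.annihilator Λ X) :
    (∀ X ∈ F, I ≤ Module.annihilator Λ X) ∧
    ∃ (Γ : Type) (_ : Ring Γ) (π : Λ →+* Γ),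
      Function.Surjective π ∧ RingHom.ker π = I ∧
      (ModuleCat.restrictScalars π).obj (ModuleCat.of Γ Γ) ∈ F ∧
      IsTorsionTheory Γ
        {X : ModuleCat.{0} Γ | (ModuleCat.restrictScalars π).obj X ∈ T}
        {X : ModuleCat.{0} Γ | (ModuleCat.restrictScalars π).obj X ∈ F} := by
  classical
  have hann : ∀ X ∈ F, I ≤ Module.annihilator Λ X := by
    intro X hX
    rw [hI]
    exact iInf₂_le X hX
  refine ⟨hann, ?_⟩
  haveI : IsArtinianRing Λ := IsArtinianRing.of_finite R Λ
  -- point annihilators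
  let Pt : Type 1 := Σ X : {X : ModuleCat.{0} Λ // X ∈ F}, (X.1 : Type)
  let ptMap : ∀ p : Pt, Λ →ₗ[Λ] (p.1.1 : Type) := fun p =>
    { toFun := fun a => a • p.2
      map_add' := fun a b => add_smul a b p.2
      map_smul' := fun c a => mul_smul c a p.2 }
  let K : Pt → Ideal Λ := fun p => LinearMap.ker (ptMap p)
  have hIK : ∀ p : Pt, I ≤ K p := by
    intro p a ha
    simp only [K, LinearMap.mem_ker, ptMap, LinearMap.coe_mk, AddHom.coe_mk]
    exact Module.mem_annihilator.mp (hann p.1.1 p.1.2 ha) p.2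
  -- minimal finite intersection
  obtain ⟨J, hJmem, hmin⟩ := IsArtinian.set_has_minimal
    {J : Ideal Λ | ∃ (n : ℕ) (q : Fin n → Pt), J = ⨅ j, K (q j)}
    ⟨⊤, 0, Fin.elim0, (iInf_of_empty _).symm⟩
  obtain ⟨n, q, rfl⟩ := hJmem
  have hle : ∀ p : Pt, (⨅ j, K (q j)) ≤ K p := by
    intro p
    have hfun : (fun j : Fin (n + 1) => K (Fin.cons (α := fun _ => Pt) p q j))
        = Fin.cons (K p) (fun j => K (q j)) := by
      funext j
      induction j using Fin.cases
      · simp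
      · simp
    have hmem : ((⨅ j, K (q j)) ⊓ K p) ∈
        {J : Ideal Λ | ∃ (n : ℕ) (q : Fin n → Pt), J = ⨅ j, K (q j)} := by
      refine ⟨n + 1, Fin.cons (α := fun _ => Pt) p q, ?_⟩
      rw [hfun, aux_iInf_cons, inf_comm]
    have h1 : (⨅ j, K (q j)) ⊓ K p ≤ ⨅ j, K (q j) := inf_le_left
    have heq := eq_of_le_of_not_lt h1 (hmin _ hmem)
    rw [← heq]
    exact inf_le_right
  have hJI : (⨅ j, K (q j)) = I := by
    refine le_antisymm ?_ (le_iInf fun j => hIK (q j))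
    rw [hI]
    refine le_iInf fun X => le_iInf fun hX => ?_
    intro a ha
    rw [Module.mem_annihilator]
    intro m
    have := hle ⟨⟨X, hX⟩, m⟩ ha
    simpa [K, ptMap, LinearMap.mem_ker] using this
  -- the module M
  let M : Type := ∀ j : Fin n, ((q j).1.1 : Type)
  have hXM : ModuleCat.of Λ M ∈ F :=
    memF_pi htf (fun j => (q j).1.1) (fun j => (q j).1.2)
  let x₀ : M := fun j => (q j).2
  let Φ : Λ →ₗ[Λ] M := LinearMap.pi (fun j => ptMap (q j))
  have hkerΦ : LinearMap.ker Φ = I := by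
    rw [← hJI]
    ext a
    simp only [Φ, LinearMap.mem_ker, Submodule.mem_iInf, K, ptMap]
    rw [funext_iff]
    refine forall_congr' fun j => ?_
    exact Iff.rfl
  have hannM : Module.annihilator Λ M = I := by
    apply le_antisymm
    · rw [← hkerΦ]
      intro a ha
      rw [LinearMap.mem_ker]
      have h := Module.mem_annihilator.mp ha x₀
      have hΦ : Φ a = a • x₀ := rfl
      rw [hΦ, h]
    · intro a ha
      rw [Module.mem_annihilator]
      intro m
      funext j
      exact Module.mem_annihilator.mp (hann _ (q j).1.2 ha) (m j)
  -- the ring Γ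
  let ρ : Λ →+* AddMonoid.End M := Module.toAddMonoidEnd Λ M
  have hkerρ : RingHom.ker ρ = I := hannM
  have hs : Function.Surjective ρ.rangeRestrict := ρ.rangeRestrict_surjective
  have hker : RingHom.ker ρ.rangeRestrict = I := by
    rw [RingHom.ker_rangeRestrict]
    exact hkerρ
  refine ⟨ρ.range, inferInstance, ρ.rangeRestrict, hs, hker, ?_, aux_tt htf hann _ hs hker⟩
  -- Γ as a Λ-module lies in F
  let RG := (ModuleCat.restrictScalars ρ.rangeRestrict).obj
    (ModuleCat.of ρ.range ρ.range)
  let ψ₀ : ↥ρ.range → M := fun γ => (γ : AddMonoid.End M) x₀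
  let ψ : RG →ₗ[Λ] M :=
    { toFun := fun γ => ψ₀ γ
      map_add' := fun γ δ => rfl
      map_smul' := fun a γ => rfl }
  have hψπ : ∀ c : Λ, ψ (ρ.rangeRestrict c) = Φ c := fun c => rfl
  have hψinj : Function.Injective ψ := by
    intro γ δ hγδ
    obtain ⟨a, rfl⟩ := hs γ
    obtain ⟨b, rfl⟩ := hs δ
    rw [hψπ, hψπ] at hγδ
    have hab : a - b ∈ I := by
      rw [← hkerΦ, LinearMap.mem_ker, map_sub, hγδ, sub_self]
    have : ρ.rangeRestrict (a - b) = 0 := by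
      rw [← hker] at hab
      exact hab
    rw [RingHom.map_sub, sub_eq_zero] at this
    exact this
  have hψrange : LinearMap.range ψ = LinearMap.range Φ := by
    ext m
    constructor
    · rintro ⟨γ, rfl⟩
      obtain ⟨a, rfl⟩ := hs γ
      exact ⟨a, (hψπ a).symm⟩
    · rintro ⟨a, rfl⟩
      exact ⟨ρ.rangeRestrict a, hψπ a⟩
  have hrngF : ModuleCat.of Λ (LinearMap.range Φ) ∈ F := by
    refine memF_sub htf hXM (LinearMap.range Φ) ?_
    exact Module.Finite.range Φ
  exact memF_of_equiv htf hrngF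
    ((LinearEquiv.ofInjective ψ hψinj).trans (LinearEquiv.ofEq _ _ hψrange)).symm

end Iyama
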